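/- Let n ≥ 1, let Δt > 0, and let d : ℝ → ℝ^n be continuously differentiable on a neighborhood of γ = 1 with d(1) ≠ 0. Define h(λ, γ) = λ − (γ − 1) Δt ‖d(γ)‖₂, where ‖·‖₂ is the Euclidean norm. Then there exist ε > 0 and a continuous function γ̃ : (−ε, ε) → ℝ with γ̃(0) = 1 such that h(λ, γ̃(λ)) = 0 for every λ ∈ (−ε, ε). -/

import Mathlib

/-- Let `n ≥ 1`, `Δt > 0`, and let `d : ℝ → ℝⁿ` be continuously
differentiable on a neighborhood of `γ = 1` with `d 1 ≠ 0`. For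
`h(λ, γ) = λ - (γ - 1) Δt ‖d γ‖₂` there are `ε > 0` and a continuous function
`γ̃ : (-ε, ε) → ℝ` with `γ̃ 0 = 1` solving `h(λ, γ̃ λ) = 0` for all `λ ∈ (-ε, ε)`. -/
theorem stmt_2 {n : ℕ} (hn : 1 ≤ n) (Δt : ℝ) (hΔt : 0 < Δt)
    (d : ℝ → EuclideanSpace ℝ (Fin n))
    (hd : ContDiffAt ℝ 1 d 1) (hd1 : d 1 ≠ 0) :
    ∃ ε > (0 : ℝ), ∃ γ' : ℝ → ℝ, γ' 0 = 1 ∧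
      ContinuousOn γ' (Set.Ioo (-ε) ε) ∧
      ∀ lam ∈ Set.Ioo (-ε) ε, lam - (γ' lam - 1) * Δt * ‖d (γ' lam)‖ = 0 := by
  set g : ℝ → ℝ := fun γ => (γ - 1) * Δt * ‖d γ‖ with hgdef
  have hg1 : g 1 = 0 := by simp [hgdef]
  -- `γ ↦ Δt * ‖d γ‖` is C¹ at 1, hence has a strict derivative there
  have hnorm : ContDiffAt ℝ 1 (fun γ => Δt * ‖d γ‖) 1 :=
    (contDiffAt_const).mul (hd.norm ℝ hd1)
  have hns : HasStrictDerivAt (fun γ => Δt * ‖d γ‖) (deriv (fun γ => Δt * ‖d γ‖) 1) 1 :=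
    hnorm.hasStrictDerivAt one_ne_zero
  set c' : ℝ := deriv (fun γ => Δt * ‖d γ‖) 1
  have hgs : HasStrictDerivAt g (Δt * ‖d 1‖) 1 := by
    have h1 : HasStrictDerivAt (fun γ : ℝ => γ - 1) 1 1 :=
      by simpa using (hasStrictDerivAt_id (1:ℝ)).fun_sub (hasStrictDerivAt_const (1:ℝ) (1:ℝ))
    have := h1.fun_mul hns
    have heq : (fun γ : ℝ => (γ - 1) * (Δt * ‖d γ‖)) = g := by
      funext γ; simp [hgdef, mul_assoc]
    rw [heq] at this
    simpa using this
  have hg' : (Δt * ‖d 1‖) ≠ 0 :=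
    ne_of_gt (mul_pos hΔt (norm_pos_iff.mpr hd1))
  -- package the derivative as a continuous linear equivalence
  have H : HasStrictFDerivAt g
      ((ContinuousLinearEquiv.unitsEquivAut ℝ (Units.mk0 _ hg')) : ℝ →L[ℝ] ℝ) 1 := by
    exact hgs.hasStrictFDerivAt_equiv hg'
  set P := H.toOpenPartialHomeomorph g with hP
  have hsrc : (1 : ℝ) ∈ P.source := H.mem_toOpenPartialHomeomorph_source
  have htgt : (0 : ℝ) ∈ P.target := by
    have := H.image_mem_toOpenPartialHomeomorph_target
    rwa [show g 1 = 0 from hg1] at this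
  have hPcoe : (P : ℝ → ℝ) = g := H.toOpenPartialHomeomorph_coe
  -- pick ε with Ioo (-ε) ε ⊆ P.target
  obtain ⟨ε, hε, hball⟩ := Metric.isOpen_iff.1 P.open_target 0 htgt
  have hIoo : Set.Ioo (-ε) ε ⊆ P.target := by
    intro x hx
    apply hball
    rw [Real.ball_eq_Ioo]
    simpa using hx
  refine ⟨ε, hε, P.symm, ?_, ?_, ?_⟩
  · have := P.left_inv hsrc
    rw [hPcoe, hg1] at this
    exact this
  · exact P.continuousOn_symm.mono hIoo
  · intro lam hlam
    have hy := P.right_inv (hIoo hlam)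
    rw [hPcoe] at hy
    have : g (P.symm lam) = lam := hy
    simp only [hgdef] at this
    linarith
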